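/- Let p(z) = Σ_{j=0}^m a_j z^j be a polynomial with complex coefficients such that a_m ≠ 0 and p(ξ) ≠ 0 for every ξ ∈ ℝ; write p(D)u = Σ_{j=0}^m a_j (-i)^j u^{(j)} (D = -i d/dx). Then p(D) maps 𝒮(ℝ) into 𝒮(ℝ) and is a linear bijection of 𝒮(ℝ) onto itself; in particular, for every f ∈ 𝒮(ℝ) there is a unique u ∈ 𝒮(ℝ) with Σ_{j=0}^m a_j (-i)^j u^{(j)}(x) = f(x) for all x ∈ ℝ. -/

import Mathlib

open scoped BigOperators

open Polynomial Complex MeasureTheory SchwartzMap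
open scoped FourierTransform Real

namespace EllipticAux

lemma contDiff_eval_ofReal (Q : ℂ[X]) {n : WithTop ℕ∞} : ContDiff ℝ n (fun t : ℝ => Q.eval (t : ℂ)) := by
  induction Q using Polynomial.induction_on' with
  | add p q hp hq => simpa [Polynomial.eval_add] using hp.add hq
  | monomial n c =>
      simpa [Polynomial.eval_monomial] using
        contDiff_const.mul (Complex.ofRealCLM.contDiff.pow n)

lemma hasDerivAt_eval_ofReal (Q : ℂ[X]) (x : ℝ) :
    HasDerivAt (fun t : ℝ => Q.eval (t : ℂ)) (Q.derivative.eval (x : ℂ)) x :=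
  (Q.hasDerivAt (x : ℂ)).comp_ofReal

lemma exists_poly_bound (Q : ℂ[X]) :
    ∃ C : ℝ, ∀ x : ℝ, ‖Q.eval (x : ℂ)‖ ≤ C * (1 + ‖x‖) ^ Q.natDegree := by
  refine ⟨∑ i ∈ Finset.range (Q.natDegree + 1), ‖Q.coeff i‖, fun x => ?_⟩
  have h1 : (0:ℝ) ≤ ‖x‖ := norm_nonneg x
  calc ‖Q.eval (x : ℂ)‖ = ‖∑ i ∈ Finset.range (Q.natDegree + 1), Q.coeff i * (x:ℂ) ^ i‖ := by
        rw [Polynomial.eval_eq_sum_range]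
    _ ≤ ∑ i ∈ Finset.range (Q.natDegree + 1), ‖Q.coeff i * (x:ℂ) ^ i‖ := norm_sum_le _ _
    _ ≤ ∑ i ∈ Finset.range (Q.natDegree + 1), ‖Q.coeff i‖ * (1 + ‖x‖) ^ Q.natDegree := by
        refine Finset.sum_le_sum fun i hi => ?_
        rw [norm_mul, norm_pow, Complex.norm_real]
        have hin : i ≤ Q.natDegree := by
          simpa [Nat.lt_succ_iff] using Finset.mem_range.mp hi
        have : ‖x‖ ^ i ≤ (1 + ‖x‖) ^ Q.natDegree := by
          calc ‖x‖ ^ i ≤ (1 + ‖x‖) ^ i := by gcongr; linarith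
            _ ≤ (1 + ‖x‖) ^ Q.natDegree := by
                apply pow_le_pow_right₀ (by linarith) hin
        exact mul_le_mul_of_nonneg_left this (norm_nonneg _)
    _ = (∑ i ∈ Finset.range (Q.natDegree + 1), ‖Q.coeff i‖) * (1 + ‖x‖) ^ Q.natDegree := by
        rw [Finset.sum_mul]

lemma iteratedDeriv_eval_ofReal (P : ℂ[X]) (n : ℕ) :
    iteratedDeriv n (fun t : ℝ => P.eval (t : ℂ))
      = fun t : ℝ => ((Polynomial.derivative)^[n] P).eval (t : ℂ) := by
  induction n with
  | zero => simp
  | succ n ih =>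
      rw [iteratedDeriv_succ, ih]
      funext x
      rw [Function.iterate_succ_apply']
      exact (hasDerivAt_eval_ofReal _ x).deriv

lemma temperate_eval_ofReal (P : ℂ[X]) :
    Function.HasTemperateGrowth (fun t : ℝ => P.eval (t : ℂ)) := by
  refine ⟨contDiff_eval_ofReal P, fun n => ?_⟩
  obtain ⟨C, hC⟩ := exists_poly_bound ((Polynomial.derivative)^[n] P)
  refine ⟨((Polynomial.derivative)^[n] P).natDegree, C, fun x => ?_⟩
  rw [norm_iteratedFDeriv_eq_norm_iteratedDeriv, iteratedDeriv_eval_ofReal]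
  exact hC x

lemma inv_formula (P : ℂ[X]) (hP : ∀ x : ℝ, P.eval (x : ℂ) ≠ 0) (n : ℕ) :
    ∃ Q : ℂ[X], iteratedDeriv n (fun t : ℝ => (P.eval (t : ℂ))⁻¹)
      = fun t : ℝ => Q.eval (t : ℂ) / (P.eval (t : ℂ)) ^ (n + 1) := by
  induction n with
  | zero =>
      refine ⟨1, ?_⟩
      rw [iteratedDeriv_zero]
      funext x
      rw [Polynomial.eval_one, pow_one, one_div]
  | succ n ih =>
      obtain ⟨Q, hQ⟩ := ih
      refine ⟨Q.derivative * P - Polynomial.C ((n : ℂ) + 1) * (Q * P.derivative), ?_⟩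
      rw [iteratedDeriv_succ, hQ]
      funext x
      have hD : HasDerivAt (fun t : ℝ => (P.eval (t : ℂ)) ^ (n + 1))
          (((n : ℂ) + 1) * (P.eval (x : ℂ)) ^ n * P.derivative.eval (x : ℂ)) x := by
        have := ((P.hasDerivAt ((x : ℝ) : ℂ)).pow (n + 1)).comp_ofReal
        simpa using this
      have hder := ((hasDerivAt_eval_ofReal Q x).div hD (pow_ne_zero _ (hP x))).deriv
      rw [show (fun t : ℝ => Q.eval (t : ℂ) / (P.eval (t : ℂ)) ^ (n + 1)) = (fun t : ℝ => Q.eval (t : ℂ)) / (fun t : ℝ => (P.eval (t : ℂ)) ^ (n + 1)) from rfl, hder]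
      have hPx := hP x
      field_simp
      simp only [Polynomial.eval_sub, Polynomial.eval_mul, Polynomial.eval_C]
      ring

lemma temperate_inv_poly (P : ℂ[X]) (hP : ∀ x : ℝ, P.eval (x : ℂ) ≠ 0)
    {c : ℝ} (hc : 0 < c) (hlb : ∀ x : ℝ, c ≤ ‖P.eval (x : ℂ)‖) :
    Function.HasTemperateGrowth (fun t : ℝ => (P.eval (t : ℂ))⁻¹) := by
  refine ⟨(contDiff_eval_ofReal P).inv hP, fun n => ?_⟩
  obtain ⟨Q, hQ⟩ := inv_formula P hP n
  obtain ⟨C, hC⟩ := exists_poly_bound Q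
  refine ⟨Q.natDegree, C / c ^ (n + 1), fun x => ?_⟩
  rw [norm_iteratedFDeriv_eq_norm_iteratedDeriv, hQ]
  have h2 : c ^ (n + 1) ≤ ‖P.eval (x : ℂ)‖ ^ (n + 1) :=
    pow_le_pow_left₀ hc.le (hlb x) _
  calc ‖Q.eval (x:ℂ) / (P.eval (x:ℂ)) ^ (n+1)‖
      = ‖Q.eval (x:ℂ)‖ / ‖P.eval (x:ℂ)‖ ^ (n+1) := by rw [norm_div, norm_pow]
    _ ≤ (C * (1 + ‖x‖) ^ Q.natDegree) / c ^ (n + 1) := by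
        apply div_le_div₀ ((norm_nonneg _).trans (hC x)) (hC x) (pow_pos hc _) h2
    _ = C / c ^ (n + 1) * (1 + ‖x‖) ^ Q.natDegree := by ring

lemma schwartz_iterate_deriv (j : ℕ) (u : 𝓢(ℝ, ℂ)) :
    ⇑((derivCLM ℝ ℂ)^[j] u) = iteratedDeriv j (⇑u) := by
  induction j generalizing u with
  | zero => simp
  | succ j ih =>
      rw [Function.iterate_succ_apply, ih, iteratedDeriv_succ']
      congr 1

lemma fourier_iterate (j : ℕ) (u : 𝓢(ℝ, ℂ)) (ξ : ℝ) :
    𝓕 (⇑((derivCLM ℝ ℂ)^[j] u)) ξ = (2 * π * Complex.I * ξ) ^ j * 𝓕 (⇑u) ξ := by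
  induction j generalizing u with
  | zero => simp
  | succ j ih =>
      rw [Function.iterate_succ_apply, ih]
      have hcoe : ⇑(derivCLM ℝ ℂ u) = deriv (⇑u) := funext fun x => derivCLM_apply ℝ u x
      have hder := Real.fourier_deriv u.integrable u.differentiable
        (by rw [← hcoe]; exact (derivCLM ℝ ℂ u).integrable)
      rw [hcoe, hder]
      simp only [smul_eq_mul]
      ring

end EllipticAux

/-- If `p(z) = Σ_{j≤m} a_j z^j` has `a_m ≠ 0` and no real zeros, then
`p(D) = Σ_j a_j (-i)^j (d/dx)^j` maps `𝒮(ℝ)` into itself and is a linear bijection of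
`𝒮(ℝ)` onto itself; in particular every `f ∈ 𝒮(ℝ)` has a unique Schwartz solution `u` of
`p(D)u = f`. -/
theorem elliptic_constant_coeff_bijective_on_schwartz (m : ℕ) (a : ℕ → ℂ) (ham : a m ≠ 0)
    (hp : ∀ ξ : ℝ, (∑ j ∈ Finset.range (m + 1), a j * (ξ : ℂ) ^ j) ≠ 0) :
    (∀ u : SchwartzMap ℝ ℂ, ∃ v : SchwartzMap ℝ ℂ, ∀ x : ℝ,
        v x = ∑ j ∈ Finset.range (m + 1), a j * (-Complex.I) ^ j * iteratedDeriv j (⇑u) x) ∧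
    (∀ f : SchwartzMap ℝ ℂ, ∃! u : SchwartzMap ℝ ℂ, ∀ x : ℝ,
        (∑ j ∈ Finset.range (m + 1), a j * (-Complex.I) ^ j * iteratedDeriv j (⇑u) x) = f x) := by
  classical
  set b : ℕ → ℂ := fun j => a j * (2 * (π : ℂ)) ^ j with hb
  set P : Polynomial ℂ := ∑ j ∈ Finset.range (m + 1), Polynomial.C (b j) * Polynomial.X ^ j
    with hPdef
  have hPeval : ∀ z : ℂ, P.eval z
      = ∑ j ∈ Finset.range (m + 1), a j * (2 * (π : ℂ)) ^ j * z ^ j := by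
    intro z
    rw [hPdef, Polynomial.eval_finset_sum]
    simp [hb]
  have hPreal : ∀ x : ℝ,
      P.eval (x : ℂ) = ∑ j ∈ Finset.range (m + 1), a j * (((2 * π * x : ℝ)) : ℂ) ^ j := by
    intro x
    rw [hPeval]
    refine Finset.sum_congr rfl fun j _ => ?_
    push_cast
    ring
  have hP0 : ∀ x : ℝ, P.eval (x : ℂ) ≠ 0 := fun x => by rw [hPreal]; exact hp (2 * π * x)
  -- lower bound on ‖P.eval x‖ over real x
  have hlb : ∃ c : ℝ, 0 < c ∧ ∀ x : ℝ, c ≤ ‖P.eval (x : ℂ)‖ := by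
    rcases Nat.eq_zero_or_pos m with hm | hm
    · have ha0 : ∀ x : ℝ, P.eval (x : ℂ) = a 0 := by
        intro x
        rw [hPreal]
        subst hm
        simp
      refine ⟨‖a 0‖, ?_, fun x => by rw [ha0]⟩
      rw [norm_pos_iff]
      intro h
      exact hP0 0 (by rw [ha0 0, h])
    · have hcoeff : P.coeff m = b m := by
        rw [hPdef, Polynomial.finset_sum_coeff]
        simp only [Polynomial.coeff_C_mul, Polynomial.coeff_X_pow]
        rw [Finset.sum_eq_single m]
        · simp
        · intro j _ hne
          simp [Ne.symm hne]
        · intro h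
          exact absurd (Finset.self_mem_range_succ m) h
      have hbm : b m ≠ 0 := by
        refine mul_ne_zero ham (pow_ne_zero _ ?_)
        exact mul_ne_zero two_ne_zero (Complex.ofReal_ne_zero.mpr Real.pi_ne_zero)
      have hdeg : 0 < P.degree := by
        refine lt_of_lt_of_le ?_ (Polynomial.le_degree_of_ne_zero (hcoeff ▸ hbm))
        exact_mod_cast hm
      have hz : Filter.Tendsto (fun x : ℝ => ‖((x : ℂ))‖) (Filter.cocompact ℝ)
          Filter.atTop := by
        simpa only [Complex.norm_real] using tendsto_norm_cocompact_atTop (E := ℝ)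
      have htend := P.tendsto_norm_atTop hdeg hz
      obtain ⟨x₀, hx₀⟩ :=
        ((EllipticAux.contDiff_eval_ofReal P (n := 1)).continuous.norm).exists_forall_le htend
      exact ⟨‖P.eval (x₀ : ℂ)‖, norm_pos_iff.mpr (hP0 x₀), hx₀⟩
  obtain ⟨c, hc, hclb⟩ := hlb
  have hg_temp := EllipticAux.temperate_eval_ofReal P
  have hh_temp := EllipticAux.temperate_inv_poly P hP0 hc hclb
  let F := FourierTransform.fourierCLE ℂ (𝓢(ℝ, ℂ))
  let Mg := SchwartzMap.bilinLeftCLM (ContinuousLinearMap.mul ℝ ℂ) hg_temp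
  let Mh := SchwartzMap.bilinLeftCLM (ContinuousLinearMap.mul ℝ ℂ) hh_temp
  have hMg : ∀ (w : 𝓢(ℝ, ℂ)) (x : ℝ), Mg w x = w x * P.eval (x : ℂ) := fun w x => rfl
  have hMh : ∀ (w : 𝓢(ℝ, ℂ)) (x : ℝ), Mh w x = w x * (P.eval (x : ℂ))⁻¹ := fun w x => rfl
  have coe_sum : ∀ (G : ℕ → 𝓢(ℝ, ℂ)) (x : ℝ),
      (∑ j ∈ Finset.range (m + 1), G j) x = ∑ j ∈ Finset.range (m + 1), G j x := by
    intro G x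
    have h := map_sum (FunLike.coeAddMonoidHom 𝓢(ℝ, ℂ) ℝ ℂ) G (Finset.range (m + 1))
    calc (∑ j ∈ Finset.range (m + 1), G j) x
        = (FunLike.coeAddMonoidHom 𝓢(ℝ, ℂ) ℝ ℂ (∑ j ∈ Finset.range (m + 1), G j)) x := rfl
      _ = (∑ j ∈ Finset.range (m + 1), (FunLike.coeAddMonoidHom 𝓢(ℝ, ℂ) ℝ ℂ) (G j)) x := by rw [h]
      _ = ∑ j ∈ Finset.range (m + 1), G j x := by rw [Finset.sum_apply]; rfl
  let T : 𝓢(ℝ, ℂ) → 𝓢(ℝ, ℂ) := fun u =>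
    ∑ j ∈ Finset.range (m + 1), (a j * (-Complex.I) ^ j) • ((SchwartzMap.derivCLM ℝ ℂ)^[j] u)
  have hT : ∀ (u : 𝓢(ℝ, ℂ)) (x : ℝ),
      T u x = ∑ j ∈ Finset.range (m + 1), a j * (-Complex.I) ^ j * iteratedDeriv j (⇑u) x := by
    intro u x
    rw [show T u = ∑ j ∈ Finset.range (m + 1),
        (a j * (-Complex.I) ^ j) • ((SchwartzMap.derivCLM ℝ ℂ)^[j] u) from rfl, coe_sum]
    refine Finset.sum_congr rfl fun j _ => ?_
    rw [SchwartzMap.smul_apply, smul_eq_mul, EllipticAux.schwartz_iterate_deriv]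
  have hFT : ∀ u : 𝓢(ℝ, ℂ), F (T u) = Mg (F u) := by
    intro u
    ext ξ
    rw [hMg]
    have h2 : F (T u) = ∑ j ∈ Finset.range (m + 1),
        (a j * (-Complex.I) ^ j) • F ((SchwartzMap.derivCLM ℝ ℂ)^[j] u) := by
      rw [show T u = ∑ j ∈ Finset.range (m + 1),
          (a j * (-Complex.I) ^ j) • ((SchwartzMap.derivCLM ℝ ℂ)^[j] u) from rfl]
      rw [map_sum]
      refine Finset.sum_congr rfl fun j _ => ?_
      exact F.map_smul _ _
    rw [h2, coe_sum, hPeval, Finset.mul_sum]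
    refine Finset.sum_congr rfl fun j _ => ?_
    rw [SchwartzMap.smul_apply, smul_eq_mul]
    have h4 : F ((SchwartzMap.derivCLM ℝ ℂ)^[j] u) ξ
        = (2 * π * Complex.I * ξ) ^ j * 𝓕 (⇑u) ξ := EllipticAux.fourier_iterate j u ξ
    rw [h4]
    have hFu : F u ξ = 𝓕 (⇑u) ξ := rfl
    rw [hFu]
    have hI : (-Complex.I) * (2 * (π : ℂ) * Complex.I * (ξ : ℂ)) = 2 * (π : ℂ) * (ξ : ℂ) := by
      linear_combination (-2 * (π : ℂ) * (ξ : ℂ)) * Complex.I_mul_I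
    have hterm : (-Complex.I) ^ j * (2 * π * Complex.I * ξ) ^ j
        = (2 * (π : ℂ)) ^ j * (ξ : ℂ) ^ j := by
      rw [← mul_pow, hI, mul_pow]
    have rearr : ∀ A B C D : ℂ, A * B * (C * D) = A * (B * C) * D := fun A B C D => by ring
    rw [rearr, hterm]
    ring
  have hMhMg : ∀ w : 𝓢(ℝ, ℂ), Mh (Mg w) = w := by
    intro w
    ext x
    rw [hMh, hMg]
    exact mul_inv_cancel_right₀ (hP0 x) (w x)
  have hMgMh : ∀ w : 𝓢(ℝ, ℂ), Mg (Mh w) = w := by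
    intro w
    ext x
    rw [hMg, hMh]
    exact inv_mul_cancel_right₀ (hP0 x) (w x)
  have key : ∀ u f₀ : 𝓢(ℝ, ℂ), T u = f₀ ↔ u = F.symm (Mh (F f₀)) := by
    intro u f₀
    constructor
    · intro h
      have h1 : Mg (F u) = F f₀ := by rw [← hFT, h]
      have h2 : F u = Mh (F f₀) := by rw [← h1, hMhMg]
      rw [← h2, ContinuousLinearEquiv.symm_apply_apply]
    · intro h
      have hFu : F u = Mh (F f₀) := by rw [h, ContinuousLinearEquiv.apply_symm_apply]
      have : F (T u) = F f₀ := by rw [hFT, hFu, hMgMh]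
      exact F.injective this
  constructor
  · intro u
    exact ⟨T u, fun x => hT u x⟩
  · intro f
    refine ⟨F.symm (Mh (F f)), ?_, ?_⟩
    · intro x
      have h := (key (F.symm (Mh (F f))) f).mpr rfl
      rw [← hT, h]
    · intro u hu
      have hTu : T u = f := SchwartzMap.ext fun x => by rw [hT]; exact hu x
      exact (key u f).mp hTu
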